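/- arXiv:1309.0643 — 2 statements merged into one kernel-verified Lean document; each statement's English description precedes it below -/
import Mathlib

section
/- Let G be a connected graph of order r ≥ 2, let H be a connected graph of order t ≥ 2, and let v be a vertex of H of degree t − 1. Then dim_s(G∘_v H) = r(t − 1) − ϖ(H − v), where H − v is the graph obtained from H by deleting v and ϖ denotes the twin-free clique number. -/
namespace RootedStrong

variable {V : Type*}

/-- `u` is maximally distant from `v`: every neighbor `w` of `u` satisfies `d(v,w) ≤ d(u,v)`. -/
def MaxDistant (G : SimpleGraph V) (u v : V) : Prop :=
  ∀ w, G.Adj u w → G.dist v w ≤ G.dist u v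

/-- `u` and `v` are mutually maximally distant. -/
def MMD (G : SimpleGraph V) (u v : V) : Prop :=
  MaxDistant G u v ∧ MaxDistant G v u

/-- The boundary `∂(G)` of a graph. -/
def boundary (G : SimpleGraph V) : Set V := {u | ∃ v, MMD G u v}

/-- A vertex is simplicial if its neighborhood induces a complete graph. -/
def Simplicial (G : SimpleGraph V) (u : V) : Prop :=
  ∀ x ∈ G.neighborSet u, ∀ y ∈ G.neighborSet u, x ≠ y → G.Adj x y

/-- The set `σ(G)` of simplicial vertices. -/
def simplicialSet (G : SimpleGraph V) : Set V := {u | Simplicial G u}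

/-- `w` strongly resolves `u` and `v`. -/
def StronglyResolves (G : SimpleGraph V) (w u v : V) : Prop :=
  G.dist w u = G.dist w v + G.dist v u ∨ G.dist w v = G.dist w u + G.dist u v

/-- A set of vertices is a strong metric generator if every pair of distinct vertices is
strongly resolved by some of its elements. -/
def IsStrongGenerator (G : SimpleGraph V) (S : Set V) : Prop :=
  ∀ u v : V, u ≠ v → ∃ w ∈ S, StronglyResolves G w u v

/-- The strong metric dimension of a graph. -/
noncomputable def sdim (G : SimpleGraph V) [Fintype V] : ℕ :=
  sInf {n | ∃ S : Finset V, S.card = n ∧ IsStrongGenerator G (S : Set V)}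

/-- A strong metric basis: a strong metric generator of minimum cardinality. -/
def IsStrongBasis (G : SimpleGraph V) [Fintype V] (S : Finset V) : Prop :=
  IsStrongGenerator G (S : Set V) ∧ S.card = sdim G

/-- The rooted product graph `G ∘_v H`. -/
def rootedProd {α β : Type*} (G : SimpleGraph α) (H : SimpleGraph β) (v : β) :
    SimpleGraph (α × β) where
  Adj p q := (p.1 = q.1 ∧ H.Adj p.2 q.2) ∨ (p.2 = v ∧ q.2 = v ∧ G.Adj p.1 q.1)
  symm := by
    constructor
    rintro ⟨a, x⟩ ⟨b, y⟩ (⟨h1, h2⟩ | ⟨h1, h2, h3⟩)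
    · exact Or.inl ⟨h1.symm, h2.symm⟩
    · exact Or.inr ⟨h2, h1, h3.symm⟩
  loopless := by
    constructor
    rintro ⟨a, x⟩ (⟨_, h2⟩ | ⟨_, _, h3⟩)
    · exact H.irrefl h2
    · exact G.irrefl h3

/-- Two distinct vertices are true twins if they have equal closed neighborhoods. -/
def TrueTwins (G : SimpleGraph V) (x y : V) : Prop :=
  x ≠ y ∧ ∀ z, (z = x ∨ G.Adj x z) ↔ (z = y ∨ G.Adj y z)

/-- A twin-free clique: a clique containing no pair of true twins. -/
def IsTwinFreeClique (G : SimpleGraph V) (X : Set V) : Prop :=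
  (∀ x ∈ X, ∀ y ∈ X, x ≠ y → G.Adj x y) ∧ ∀ x ∈ X, ∀ y ∈ X, ¬ TrueTwins G x y

/-- The twin-free clique number `ϖ(G)`. -/
noncomputable def twinFreeCliqueNum (G : SimpleGraph V) : ℕ :=
  sSup {n | ∃ X : Set V, IsTwinFreeClique G X ∧ X.ncard = n}



section Aux

open SimpleGraph

attribute [local instance] Classical.propDecidable

variable {α β : Type*} {G : SimpleGraph α} {H : SimpleGraph β} {v : β}

/-- Distance template for the rooted product when `v` is universal in `H`. -/
noncomputable def Dst (G : SimpleGraph α) (H : SimpleGraph β) (v : β) (p q : α × β) : ℕ :=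
  if p.1 = q.1 then H.dist p.2 q.2
  else (if p.2 = v then 0 else 1) + G.dist p.1 q.1 + (if q.2 = v then 0 else 1)

lemma hdist_formula (hHc : H.Connected) (hu : ∀ x, x ≠ v → H.Adj v x) (x y : β) :
    H.dist x y = if x = y then 0 else if H.Adj x y then 1 else 2 := by
  split_ifs with h1 h2
  · subst h1; exact SimpleGraph.dist_self
  · exact SimpleGraph.dist_eq_one_iff_adj.mpr h2
  · have hxv : x ≠ v := by rintro rfl; exact h2 (hu y (fun hy => h1 hy.symm))
  -- y ≠ v as well
    have hyv : y ≠ v := by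
      rintro rfl; exact h2 ((hu x hxv).symm)
    have hxvd : H.dist x v = 1 := SimpleGraph.dist_eq_one_iff_adj.mpr ((hu x hxv).symm)
    have hvyd : H.dist v y = 1 := SimpleGraph.dist_eq_one_iff_adj.mpr (hu y hyv)
    have htri := hHc.dist_triangle (u := x) (v := v) (w := y)
    have h0 : H.dist x y ≠ 0 := fun hc => h1 (hHc.dist_eq_zero_iff.mp hc)
    have hne1 : H.dist x y ≠ 1 := fun hc => h2 (SimpleGraph.dist_eq_one_iff_adj.mp hc)
    omega

lemma dist_to_root (hHc : H.Connected) (hu : ∀ x, x ≠ v → H.Adj v x) (x : β) :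
    H.dist x v = if x = v then 0 else 1 := by
  rw [hdist_formula hHc hu]
  split_ifs with h1 h2
  · rfl
  · rfl
  · exact absurd ((hu x h1).symm) h2

lemma dist_from_root (hHc : H.Connected) (hu : ∀ x, x ≠ v → H.Adj v x) (y : β) :
    H.dist v y = if y = v then 0 else 1 := by
  rw [SimpleGraph.dist_comm]
  exact dist_to_root hHc hu y

/-- The copy embedding as a graph hom. -/
def copyHom (G : SimpleGraph α) (H : SimpleGraph β) (v : β) (a : α) :
    H →g rootedProd G H v where
  toFun x := (a, x)
  map_rel' h := Or.inl ⟨rfl, h⟩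

/-- The root embedding as a graph hom. -/
def rootHom (G : SimpleGraph α) (H : SimpleGraph β) (v : β) :
    G →g rootedProd G H v where
  toFun a := (a, v)
  map_rel' h := Or.inr ⟨rfl, rfl, h⟩

lemma dist_copy_le (hHc : H.Connected) (a : α) (x y : β) :
    (rootedProd G H v).dist (a, x) (a, y) ≤ H.dist x y := by
  obtain ⟨p, hp⟩ := hHc.exists_walk_length_eq_dist x y
  have := SimpleGraph.dist_le (p.map (copyHom G H v a))
  rwa [SimpleGraph.Walk.length_map, hp] at this

lemma dist_root_le (hGc : G.Connected) (a b : α) :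
    (rootedProd G H v).dist (a, v) (b, v) ≤ G.dist a b := by
  obtain ⟨p, hp⟩ := hGc.exists_walk_length_eq_dist a b
  have := SimpleGraph.dist_le (p.map (rootHom G H v))
  rwa [SimpleGraph.Walk.length_map, hp] at this

lemma rooted_connected (hGc : G.Connected) (hHc : H.Connected) :
    (rootedProd G H v).Connected := by
  haveI : Nonempty α := hGc.nonempty
  haveI : Nonempty β := hHc.nonempty
  constructor
  rintro ⟨a, x⟩ ⟨b, y⟩
  have r1 : (rootedProd G H v).Reachable (a, x) (a, v) :=
    (hHc.preconnected x v).map (copyHom G H v a)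
  have r2 : (rootedProd G H v).Reachable (a, v) (b, v) :=
    (hGc.preconnected a b).map (rootHom G H v)
  have r3 : (rootedProd G H v).Reachable (b, v) (b, y) :=
    (hHc.preconnected v y).map (copyHom G H v b)
  exact (r1.trans r2).trans r3

lemma D_root_eq (hHc : H.Connected) (hu : ∀ x, x ≠ v → H.Adj v x) (a c : α) (w : β) :
    Dst G H v (a, v) (c, w) = G.dist a c + (if w = v then 0 else 1) := by
  unfold Dst
  dsimp only
  by_cases hac : a = c
  · subst hac
    rw [if_pos rfl, SimpleGraph.dist_self, dist_from_root hHc hu]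
    omega
  · rw [if_neg hac, if_pos rfl]
    omega

lemma D_lip (hGc : G.Connected) (hHc : H.Connected) (hu : ∀ x, x ≠ v → H.Adj v x)
    {p p' : α × β} (h : (rootedProd G H v).Adj p p') (q : α × β) :
    Dst G H v p q ≤ Dst G H v p' q + 1 := by
  obtain ⟨a, x⟩ := p; obtain ⟨a', z⟩ := p'; obtain ⟨c, w⟩ := q
  rcases h with ⟨h1, h2⟩ | ⟨h1, h2, h3⟩
  · dsimp only at h1 h2
    subst h1
    unfold Dst
    dsimp only
    by_cases hac : a = c
    · rw [if_pos hac, if_pos hac]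
      have htri := hHc.dist_triangle (u := x) (v := z) (w := w)
      have hxz : H.dist x z = 1 := SimpleGraph.dist_eq_one_iff_adj.mpr h2
      omega
    · rw [if_neg hac, if_neg hac]
      split_ifs <;> omega
  · dsimp only at h1 h2
    subst h1; subst h2
    rw [D_root_eq hHc hu, D_root_eq hHc hu]
    have htri := hGc.dist_triangle (u := a) (v := a') (w := c)
    have haa : G.dist a a' = 1 := SimpleGraph.dist_eq_one_iff_adj.mpr h3
    omega

lemma D_le_length (hGc : G.Connected) (hHc : H.Connected) (hu : ∀ x, x ≠ v → H.Adj v x)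
    {p q : α × β} (w : (rootedProd G H v).Walk p q) :
    Dst G H v p q ≤ w.length := by
  induction w with
  | nil => simp [Dst, SimpleGraph.dist_self]
  | cons h w ih =>
    rw [SimpleGraph.Walk.length_cons]
    exact (D_lip hGc hHc hu h _).trans (by omega)

lemma rooted_dist (hGc : G.Connected) (hHc : H.Connected) (hu : ∀ x, x ≠ v → H.Adj v x)
    (p q : α × β) :
    (rootedProd G H v).dist p q = Dst G H v p q := by
  refine le_antisymm ?_ ?_
  · obtain ⟨a, x⟩ := p; obtain ⟨b, y⟩ := q
    unfold Dst
    dsimp only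
    by_cases hab : a = b
    · subst hab
      rw [if_pos rfl]
      exact dist_copy_le hHc a x y
    · rw [if_neg hab]
      have hRc := rooted_connected hGc hHc (v := v)
      have t1 := hRc.dist_triangle (u := ((a, x) : α × β)) (v := (a, v)) (w := (b, y))
      have t2 := hRc.dist_triangle (u := ((a, v) : α × β)) (v := (b, v)) (w := (b, y))
      have c1 : (rootedProd G H v).dist (a, x) (a, v) ≤ if x = v then 0 else 1 := by
        have := dist_copy_le (v := v) (G := G) hHc a x v
        rwa [dist_to_root hHc hu] at this
      have c2 := dist_root_le (v := v) (H := H) hGc a b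
      have c3 : (rootedProd G H v).dist (b, v) (b, y) ≤ if y = v then 0 else 1 := by
        have := dist_copy_le (v := v) (G := G) hHc b v y
        rwa [dist_from_root hHc hu] at this
      omega
  · obtain ⟨w, hw⟩ := (rooted_connected hGc hHc (v := v)).exists_walk_length_eq_dist p q
    rw [← hw]
    exact D_le_length hGc hHc hu w

lemma dist_same (hGc : G.Connected) (hHc : H.Connected) (hu : ∀ x, x ≠ v → H.Adj v x)
    (a : α) (x y : β) :
    (rootedProd G H v).dist (a, x) (a, y) = H.dist x y := by
  rw [rooted_dist hGc hHc hu]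
  simp [Dst]

lemma dist_cross (hGc : G.Connected) (hHc : H.Connected) (hu : ∀ x, x ≠ v → H.Adj v x)
    {a b : α} (hab : a ≠ b) (x y : β) :
    (rootedProd G H v).dist (a, x) (b, y) =
      (if x = v then 0 else 1) + G.dist a b + (if y = v then 0 else 1) := by
  rw [rooted_dist hGc hHc hu]
  unfold Dst
  dsimp only
  rw [if_neg hab]

lemma resolves_comm {V' : Type*} {Gr : SimpleGraph V'} {w u x : V'}
    (h : StronglyResolves Gr w u x) : StronglyResolves Gr w x u := Or.symm h

lemma tt_adj {x y : β} (h : TrueTwins H x y) : H.Adj x y := by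
  rcases (h.2 x).mp (Or.inl rfl) with h' | h'
  · exact absurd h' h.1
  · exact h'.symm

lemma tt_symm {x y : β} (h : TrueTwins H x y) : TrueTwins H y x :=
  ⟨h.1.symm, fun z => (h.2 z).symm⟩

lemma forcing_cross_aux (hGc : G.Connected) (hHc : H.Connected)
    (hu : ∀ x, x ≠ v → H.Adj v x)
    {a b c : α} {x y z : β} (hab : a ≠ b) (hx : x ≠ v) (hy : y ≠ v)
    (h : (rootedProd G H v).dist (c, z) (a, x)
        = (rootedProd G H v).dist (c, z) (b, y) + (rootedProd G H v).dist (b, y) (a, x)) :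
    c = b ∧ z = y := by
  have hg : 0 < G.dist b a := hGc.pos_dist_of_ne (Ne.symm hab)
  have hgcomm : G.dist a b = G.dist b a := SimpleGraph.dist_comm
  have dqp : (rootedProd G H v).dist (b, y) (a, x) = 1 + G.dist b a + 1 := by
    rw [dist_cross hGc hHc hu (Ne.symm hab) y x, if_neg hy, if_neg hx]
  rw [dqp] at h
  by_cases hcb : c = b
  · subst hcb
    refine ⟨rfl, ?_⟩
    have hca : c ≠ a := Ne.symm hab
    rw [dist_cross hGc hHc hu hca z x, if_neg hx,
        dist_same hGc hHc hu c z y] at h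
    have hzy0 : H.dist z y = 0 := by split_ifs at h <;> omega
    exact hHc.dist_eq_zero_iff.mp hzy0
  · exfalso
    by_cases hca : c = a
    · subst hca
      rw [dist_same hGc hHc hu c z x,
          dist_cross hGc hHc hu hcb z y, if_neg hy] at h
      have hdzx := hdist_formula hHc hu z x
      split_ifs at h hdzx <;> omega
    · rw [dist_cross hGc hHc hu hca z x, if_neg hx,
          dist_cross hGc hHc hu hcb z y, if_neg hy] at h
      have htri := hGc.dist_triangle (u := c) (v := b) (w := a)
      split_ifs at h <;> omega

lemma forcing_cross (hGc : G.Connected) (hHc : H.Connected)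
    (hu : ∀ x, x ≠ v → H.Adj v x)
    {a b c : α} {x y z : β} (hab : a ≠ b) (hx : x ≠ v) (hy : y ≠ v)
    (hres : StronglyResolves (rootedProd G H v) (c, z) (a, x) (b, y)) :
    (c = a ∧ z = x) ∨ (c = b ∧ z = y) := by
  rcases hres with h | h
  · exact Or.inr (forcing_cross_aux hGc hHc hu hab hx hy h)
  · exact Or.inl (forcing_cross_aux hGc hHc hu (Ne.symm hab) hy hx h)

lemma forcing_same_aux (hGc : G.Connected) (hHc : H.Connected)
    (hu : ∀ x, x ≠ v → H.Adj v x)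
    {a c : α} {x y z : β} (hx : x ≠ v) (hy : y ≠ v) (hxy : x ≠ y)
    (hcond : ¬ H.Adj x y ∨ TrueTwins H x y)
    (h : (rootedProd G H v).dist (c, z) (a, x)
        = (rootedProd G H v).dist (c, z) (a, y) + (rootedProd G H v).dist (a, y) (a, x)) :
    c = a ∧ z = y := by
  have dyx : (rootedProd G H v).dist (a, y) (a, x) = H.dist y x := dist_same hGc hHc hu a y x
  have hyx0 : H.dist y x ≠ 0 := fun hc => hxy (hHc.dist_eq_zero_iff.mp hc).symm
  rw [dyx] at h
  by_cases hca : c = a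
  · subst hca
    refine ⟨rfl, ?_⟩
    rw [dist_same hGc hHc hu, dist_same hGc hHc hu] at h
    rcases hcond with hnadj | htw
    · have hyx2 : H.dist y x = 2 := by
        rw [hdist_formula hHc hu y x, if_neg (Ne.symm hxy),
            if_neg (fun h' : H.Adj y x => hnadj h'.symm)]
      have hzx2 : H.dist z x ≤ 2 := by
        rw [hdist_formula hHc hu z x]; split_ifs <;> omega
      have hz0 : H.dist z y = 0 := by omega
      exact hHc.dist_eq_zero_iff.mp hz0
    · have hadj : H.Adj x y := tt_adj htw
      have hyx1 : H.dist y x = 1 := SimpleGraph.dist_eq_one_iff_adj.mpr hadj.symm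
      by_cases hzy : z = y
      · exact hzy
      · exfalso
        by_cases hzx : z = x
        · subst hzx
          rw [SimpleGraph.dist_self] at h
          omega
        · have hiff : H.Adj z x ↔ H.Adj z y := by
            have h2 := htw.2 z
            constructor
            · intro hA
              rcases h2.mp (Or.inr hA.symm) with h' | h'
              · exact absurd h' hzy
              · exact h'.symm
            · intro hA
              rcases h2.mpr (Or.inr hA.symm) with h' | h'
              · exact absurd h' hzx
              · exact h'.symm
          rw [hdist_formula hHc hu z x, hdist_formula hHc hu z y,
              if_neg hzx, if_neg hzy] at h
          by_cases hA : H.Adj z x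
          · rw [if_pos hA, if_pos (hiff.mp hA)] at h; omega
          · rw [if_neg hA, if_neg (fun hB => hA (hiff.mpr hB))] at h; omega
  · exfalso
    rw [dist_cross hGc hHc hu hca z x, if_neg hx,
        dist_cross hGc hHc hu hca z y, if_neg hy] at h
    split_ifs at h <;> omega

lemma forcing_same (hGc : G.Connected) (hHc : H.Connected)
    (hu : ∀ x, x ≠ v → H.Adj v x)
    {a c : α} {x y z : β} (hx : x ≠ v) (hy : y ≠ v) (hxy : x ≠ y)
    (hcond : ¬ H.Adj x y ∨ TrueTwins H x y)
    (hres : StronglyResolves (rootedProd G H v) (c, z) (a, x) (a, y)) :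
    (c = a ∧ z = x) ∨ (c = a ∧ z = y) := by
  have hcond' : ¬ H.Adj y x ∨ TrueTwins H y x := by
    rcases hcond with h | h
    · exact Or.inl (fun h' => h h'.symm)
    · exact Or.inr (tt_symm h)
  rcases hres with h | h
  · exact Or.inr (forcing_same_aux hGc hHc hu hx hy hxy hcond h)
  · exact Or.inl (forcing_same_aux hGc hHc hu hy hx (Ne.symm hxy) hcond' h)

lemma tw_up {x y : {w : β | w ≠ v}} (h : TrueTwins H ↑x ↑y) :
    TrueTwins (H.induce {w : β | w ≠ v}) x y := by
  refine ⟨fun hc => h.1 (congrArg Subtype.val hc), fun z => ?_⟩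
  have h2 := h.2 ↑z
  simp only [SimpleGraph.comap_adj, ← Subtype.ext_iff]  at h2
  exact h2

lemma tw_down (hu : ∀ x, x ≠ v → H.Adj v x) {x y : {w : β | w ≠ v}}
    (h : TrueTwins (H.induce {w : β | w ≠ v}) x y) : TrueTwins H ↑x ↑y := by
  refine ⟨fun hc => h.1 (Subtype.ext hc), fun z => ?_⟩
  by_cases hz : z = v
  · subst hz
    constructor
    · intro _; exact Or.inr ((hu ↑y y.2).symm)
    · intro _; exact Or.inr ((hu ↑x x.2).symm)
  · have h2 := h.2 ⟨z, hz⟩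
    simp only [SimpleGraph.comap_adj, Subtype.ext_iff] at h2
    exact h2

lemma sdim_set_nonempty {V' : Type*} [Fintype V'] (Gr : SimpleGraph V') :
    {n | ∃ S : Finset V', S.card = n ∧ IsStrongGenerator Gr (S : Set V')}.Nonempty := by
  refine ⟨Finset.univ.card, Finset.univ, rfl, fun u x _ => ⟨u, by simp, Or.inr ?_⟩⟩
  rw [SimpleGraph.dist_self, Nat.zero_add]

lemma upper_gen (hGc : G.Connected) (hHc : H.Connected)
    (hu : ∀ x, x ≠ v → H.Adj v x)
    (a₀ b₀ : α) (hb₀ : b₀ ≠ a₀) (z₀ : β) (hz₀ : z₀ ≠ v)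
    (X' : Set β) (hX'v : ∀ z ∈ X', z ≠ v)
    (hXc : ∀ x ∈ X', ∀ y ∈ X', x ≠ y → H.Adj x y)
    (hXt : ∀ x ∈ X', ∀ y ∈ X', ¬ TrueTwins H x y) :
    IsStrongGenerator (rootedProd G H v)
      {p : α × β | p.2 ≠ v ∧ ¬(p.1 = a₀ ∧ p.2 ∈ X')} := by
  have key : ∀ (aa : α) (yy : β), yy ∈ X' →
      ∃ w ∈ {p : α × β | p.2 ≠ v ∧ ¬(p.1 = a₀ ∧ p.2 ∈ X')},
        StronglyResolves (rootedProd G H v) w (aa, v) (a₀, yy) := by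
    intro aa yy hyy
    have hyv : yy ≠ v := hX'v yy hyy
    by_cases haa : aa = a₀
    · subst haa
      refine ⟨(b₀, z₀), ⟨hz₀, fun hc => hb₀ hc.1⟩, Or.inr ?_⟩
      rw [dist_cross hGc hHc hu hb₀ z₀ yy, if_neg hz₀, if_neg hyv,
          dist_cross hGc hHc hu hb₀ z₀ v, if_neg hz₀, if_pos rfl,
          dist_same hGc hHc hu, dist_from_root hHc hu, if_neg hyv]
    · refine ⟨(aa, z₀), ⟨hz₀, fun hc => haa hc.1⟩, Or.inr ?_⟩
      rw [dist_cross hGc hHc hu haa z₀ yy, if_neg hz₀, if_neg hyv,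
          dist_same hGc hHc hu, dist_to_root hHc hu, if_neg hz₀,
          dist_cross hGc hHc hu haa v yy, if_pos rfl, if_neg hyv]
      omega
  rintro ⟨a, x⟩ ⟨b, y⟩ hne
  by_cases hp : (a, x) ∈ {p : α × β | p.2 ≠ v ∧ ¬(p.1 = a₀ ∧ p.2 ∈ X')}
  · exact ⟨(a, x), hp, Or.inr (by rw [SimpleGraph.dist_self, Nat.zero_add])⟩
  by_cases hq : (b, y) ∈ {p : α × β | p.2 ≠ v ∧ ¬(p.1 = a₀ ∧ p.2 ∈ X')}
  · exact ⟨(b, y), hq, Or.inl (by rw [SimpleGraph.dist_self, Nat.zero_add])⟩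
  simp only [Set.mem_setOf_eq] at hp hq
  push_neg at hp hq
  by_cases hxv : x = v
  · subst x
    by_cases hyv : y = v
    · subst y
      have hab : a ≠ b := fun h => hne (by rw [h])
      by_cases hba₀ : b = a₀
      · refine ⟨(a, z₀), ⟨hz₀, fun hc => hab (hc.1.trans hba₀.symm)⟩, Or.inr ?_⟩
        rw [dist_cross hGc hHc hu hab z₀ v, if_neg hz₀, if_pos rfl,
            dist_same hGc hHc hu, dist_to_root hHc hu, if_neg hz₀,
            dist_cross hGc hHc hu hab v v, if_pos rfl]
        omega
      · refine ⟨(b, z₀), ⟨hz₀, fun hc => hba₀ hc.1⟩, Or.inl ?_⟩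
        rw [dist_cross hGc hHc hu (Ne.symm hab) z₀ v, if_neg hz₀, if_pos rfl,
            dist_same hGc hHc hu, dist_to_root hHc hu, if_neg hz₀,
            dist_cross hGc hHc hu (Ne.symm hab) v v, if_pos rfl]
        omega
    · obtain ⟨hb, hyX⟩ := hq hyv
      subst b
      exact key a y hyX
  · obtain ⟨ha, hxX⟩ := hp hxv
    subst a
    by_cases hyv : y = v
    · subst y
      obtain ⟨w, hw, hres⟩ := key b x hxX
      exact ⟨w, hw, resolves_comm hres⟩
    · obtain ⟨hb, hyX⟩ := hq hyv
      subst b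
      have hxy : x ≠ y := fun h => hne (by rw [h])
      have htwH : ¬ TrueTwins H x y := hXt x hxX y hyX
      have hadj : H.Adj x y := hXc x hxX y hyX hxy
      have hex : ∃ z, ¬((z = x ∨ H.Adj x z) ↔ (z = y ∨ H.Adj y z)) := by
        by_contra hc
        push_neg at hc
        exact htwH ⟨hxy, fun z => hc z⟩
      obtain ⟨z, hz⟩ := hex
      by_cases hP : z = x ∨ H.Adj x z
      · have hQ : ¬(z = y ∨ H.Adj y z) := fun hq' => hz (iff_of_true hP hq')
        push_neg at hQ
        obtain ⟨hzy, hnAyz⟩ := hQ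
        have hzx : z ≠ x := by rintro rfl; exact hnAyz hadj.symm
        have hAxz : H.Adj x z := hP.resolve_left hzx
        have hzv : z ≠ v := by rintro rfl; exact hnAyz (hu y hyv).symm
        have hzX : z ∉ X' := fun hzX' => hnAyz (hXc y hyX z hzX' (Ne.symm hzy))
        refine ⟨(a₀, z), ⟨hzv, fun hc => hzX hc.2⟩, Or.inr ?_⟩
        rw [dist_same hGc hHc hu, dist_same hGc hHc hu, dist_same hGc hHc hu,
            hdist_formula hHc hu z y, if_neg hzy,
            if_neg (fun hA : H.Adj z y => hnAyz hA.symm),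
            SimpleGraph.dist_eq_one_iff_adj.mpr hAxz.symm,
            SimpleGraph.dist_eq_one_iff_adj.mpr hadj]
      · have hQ : z = y ∨ H.Adj y z := by
          by_contra hQ'
          exact hz (iff_of_false hP hQ')
        push_neg at hP
        obtain ⟨hzx, hnAxz⟩ := hP
        have hzy : z ≠ y := by rintro rfl; exact hnAxz hadj
        have hAyz : H.Adj y z := hQ.resolve_left hzy
        have hzv : z ≠ v := by rintro rfl; exact hnAxz (hu x hxv).symm
        have hzX : z ∉ X' := fun hzX' => hnAxz (hXc x hxX z hzX' (Ne.symm hzx))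
        refine ⟨(a₀, z), ⟨hzv, fun hc => hzX hc.2⟩, Or.inl ?_⟩
        rw [dist_same hGc hHc hu, dist_same hGc hHc hu, dist_same hGc hHc hu,
            hdist_formula hHc hu z x, if_neg hzx,
            if_neg (fun hA : H.Adj z x => hnAxz hA.symm),
            SimpleGraph.dist_eq_one_iff_adj.mpr hAyz.symm,
            SimpleGraph.dist_eq_one_iff_adj.mpr hadj.symm]

end Aux



theorem statement11 {α β : Type*} [Fintype α] [Fintype β]
    (G : SimpleGraph α) (H : SimpleGraph β)
    (hG : G.Connected) (hH : H.Connected)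
    {r t : ℕ} (hr : Fintype.card α = r) (h2r : 2 ≤ r)
    (ht : Fintype.card β = t) (h2t : 2 ≤ t)
    (v : β) (hv : (H.neighborSet v).ncard = t - 1) :
    (sdim (rootedProd G H v) : ℤ) =
      r * ((t : ℤ) - 1) - twinFreeCliqueNum (H.induce {w : β | w ≠ v}) := by
  classical
  -- v is universal in H
  have hsub : H.neighborSet v ⊆ {v}ᶜ := by
    intro x hx
    simp only [Set.mem_compl_iff, Set.mem_singleton_iff]
    exact fun h => H.loopless.irrefl v (h ▸ hx)
  have hcompl : ({v}ᶜ : Set β).ncard = t - 1 := by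
    rw [Set.compl_eq_univ_diff, Set.ncard_diff (Set.subset_univ _),
        Set.ncard_univ, Set.ncard_singleton, Nat.card_eq_fintype_card, ht]
  have hNeq : H.neighborSet v = {v}ᶜ :=
    Set.eq_of_subset_of_ncard_le hsub (by rw [hv, hcompl]) (Set.toFinite _)
  have hu : ∀ x, x ≠ v → H.Adj v x := by
    intro x hx
    have : x ∈ H.neighborSet v := by
      rw [hNeq]; simpa using hx
    exact this
  have hα : Nonempty α := hG.nonempty
  obtain ⟨a₀⟩ := hα
  obtain ⟨b₀, hb₀⟩ := Fintype.exists_ne_of_one_lt_card (by omega : 1 < Fintype.card α) a₀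
  obtain ⟨z₀, hz₀⟩ := Fintype.exists_ne_of_one_lt_card (by omega : 1 < Fintype.card β) v
  -- the twin-free clique number
  set K : Set ℕ := {n | ∃ X : Set {w : β | w ≠ v},
      IsTwinFreeClique (H.induce {w : β | w ≠ v}) X ∧ X.ncard = n} with hKdef
  have hbound : ∀ n ∈ K, n ≤ t - 1 := by
    rintro n ⟨X, _, rfl⟩
    calc X.ncard ≤ (Set.univ : Set {w : β | w ≠ v}).ncard :=
          Set.ncard_le_ncard (Set.subset_univ _) (Set.toFinite _)
      _ = Nat.card {w : β | w ≠ v} := Set.ncard_univ _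
      _ = ({w : β | w ≠ v} : Set β).ncard := (Nat.card_coe_set_eq _)
      _ = t - 1 := by
          rw [show {w : β | w ≠ v} = ({v}ᶜ : Set β) by ext w; simp]
          exact hcompl
  have hKbdd : BddAbove K := ⟨t - 1, fun n hn => hbound n hn⟩
  have hK0 : 0 ∈ K :=
    ⟨∅, ⟨fun x hx => absurd hx (Set.notMem_empty x),
         fun x hx => absurd hx (Set.notMem_empty x)⟩, Set.ncard_empty _⟩
  set ϖ := twinFreeCliqueNum (H.induce {w : β | w ≠ v}) with hϖ
  have hϖK : ϖ ∈ K := by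
    rw [hϖ]
    unfold twinFreeCliqueNum
    exact Nat.sSup_mem ⟨0, hK0⟩ hKbdd
  have hϖle : ϖ ≤ t - 1 := hbound _ hϖK
  obtain ⟨X, hXtfc, hXcard⟩ := hϖK
  set X' : Set β := Subtype.val '' X with hX'def
  have hX'v : ∀ z ∈ X', z ≠ v := by
    rintro z ⟨⟨w, hw⟩, _, rfl⟩; exact hw
  have hX'card : X'.ncard = ϖ := by
    rw [hX'def, Set.ncard_image_of_injective _ Subtype.val_injective, hXcard]
  have hXc' : ∀ x ∈ X', ∀ y ∈ X', x ≠ y → H.Adj x y := by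
    rintro x ⟨x₁, hx₁, rfl⟩ y ⟨y₁, hy₁, rfl⟩ hne
    have := hXtfc.1 x₁ hx₁ y₁ hy₁ (fun h => hne (congrArg Subtype.val h))
    simpa using this
  have hXt' : ∀ x ∈ X', ∀ y ∈ X', ¬ TrueTwins H x y := by
    rintro x ⟨x₁, hx₁, rfl⟩ y ⟨y₁, hy₁, rfl⟩ htt
    exact hXtfc.2 x₁ hx₁ y₁ hy₁ (tw_up htt)
  -- finset counting setup
  set Vf : Finset β := Finset.univ.erase v with hVfdef
  set NRF : Finset (α × β) := Finset.univ ×ˢ Vf with hNRFdef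
  set XF : Finset β := Finset.univ.filter (· ∈ X') with hXFdef
  have hXFcoe : (XF : Set β) = X' := by ext z; simp [hXFdef]
  have hXFcard : XF.card = ϖ := by rw [← hX'card, ← hXFcoe, Set.ncard_coe_finset]
  set badF : Finset (α × β) := XF.image (fun z => (a₀, z)) with hbadFdef
  have hinj : ∀ aa : α, Function.Injective (fun z : β => (aa, z)) :=
    fun aa z z' h => congrArg Prod.snd h
  have hbadcard : badF.card = ϖ := by
    rw [hbadFdef, Finset.card_image_of_injective _ (hinj a₀), hXFcard]
  have hmemNRF : ∀ p : α × β, p ∈ NRF ↔ p.2 ≠ v := by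
    rintro ⟨c, z⟩
    simp [hNRFdef, hVfdef]
  have hbadsub : badF ⊆ NRF := by
    intro p hp
    rw [hbadFdef, Finset.mem_image] at hp
    obtain ⟨z, hz, rfl⟩ := hp
    rw [hmemNRF]
    exact hX'v z (by simpa [hXFdef] using hz)
  have hVfcard : Vf.card = t - 1 := by
    rw [hVfdef, Finset.card_erase_of_mem (Finset.mem_univ v), Finset.card_univ, ht]
  have hNRFcard : NRF.card = r * (t - 1) := by
    rw [hNRFdef, Finset.card_product, Finset.card_univ, hr, hVfcard]
  set S₀ : Finset (α × β) := NRF \ badF with hS₀def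
  have hS₀card : S₀.card = r * (t - 1) - ϖ := by
    rw [hS₀def, Finset.card_sdiff_of_subset hbadsub, hNRFcard, hbadcard]
  have hS₀coe : (S₀ : Set (α × β)) = {p : α × β | p.2 ≠ v ∧ ¬(p.1 = a₀ ∧ p.2 ∈ X')} := by
    ext ⟨c, z⟩
    simp only [hS₀def, Finset.coe_sdiff, Set.mem_diff, Finset.mem_coe, hmemNRF,
      hbadFdef, Finset.mem_image, Set.mem_setOf_eq]
    constructor
    · rintro ⟨h1, h2⟩
      refine ⟨h1, ?_⟩
      rintro ⟨rfl, hzX⟩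
      exact h2 ⟨z, by simp [hXFdef, hzX], rfl⟩
    · rintro ⟨h1, h2⟩
      refine ⟨h1, ?_⟩
      rintro ⟨z', hz', heq⟩
      refine h2 ⟨(congrArg Prod.fst heq).symm, ?_⟩
      have hz'' : z' = z := congrArg Prod.snd heq
      subst hz''
      simpa [hXFdef] using hz'
  have hgen := upper_gen hG hH hu a₀ b₀ hb₀ z₀ hz₀ X' hX'v hXc' hXt'
  have hupper : sdim (rootedProd G H v) ≤ r * (t - 1) - ϖ := by
    unfold sdim
    exact Nat.sInf_le ⟨S₀, hS₀card, by rw [hS₀coe]; exact hgen⟩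
  obtain ⟨Smin, hSmincard, hSmingen⟩ := Nat.sInf_mem (sdim_set_nonempty (rootedProd G H v))
  have hc' : Smin.card = sdim (rootedProd G H v) := hSmincard
  have hlower : r * (t - 1) - ϖ ≤ sdim (rootedProd G H v) := by
    rw [← hc']
    by_cases hbad : ∃ p : α × β, p.2 ≠ v ∧ p ∉ Smin
    · obtain ⟨⟨a₁, x₁⟩, hx₁, hmem₁⟩ := hbad
      have honly : ∀ c z, z ≠ v → (c, z) ∉ Smin → c = a₁ := by
        intro c z hzv hcz
        by_contra hne
        obtain ⟨w, hwS, hres⟩ :=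
          hSmingen (c, z) (a₁, x₁) (fun h => hne (congrArg Prod.fst h))
        obtain ⟨cw, zw⟩ := w
        rcases forcing_cross hG hH hu hne hzv hx₁ hres with ⟨rfl, rfl⟩ | ⟨rfl, rfl⟩
        · exact hcz (Finset.mem_coe.mp hwS)
        · exact hmem₁ (Finset.mem_coe.mp hwS)
      set T : Set β := {z | z ≠ v ∧ (a₁, z) ∉ Smin} with hTdef
      have hTprop : ∀ z₁ ∈ T, ∀ z₂ ∈ T, z₁ ≠ z₂ → H.Adj z₁ z₂ ∧ ¬ TrueTwins H z₁ z₂ := by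
        intro z₁ hz₁ z₂ hz₂ hne
        by_contra hcon
        have hcond : ¬ H.Adj z₁ z₂ ∨ TrueTwins H z₁ z₂ := by tauto
        obtain ⟨w, hwS, hres⟩ :=
          hSmingen (a₁, z₁) (a₁, z₂) (fun h => hne (congrArg Prod.snd h))
        obtain ⟨cw, zw⟩ := w
        rcases forcing_same hG hH hu hz₁.1 hz₂.1 hne hcond hres with ⟨rfl, rfl⟩ | ⟨rfl, rfl⟩
        · exact hz₁.2 (Finset.mem_coe.mp hwS)
        · exact hz₂.2 (Finset.mem_coe.mp hwS)
      have hTK : T.ncard ∈ K := by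
        refine ⟨(Subtype.val ⁻¹' T : Set {w : β | w ≠ v}), ⟨?_, ?_⟩, ?_⟩
        · rintro ⟨x₂, hx₂⟩ hx₂T ⟨y₂, hy₂⟩ hy₂T hne12
          have := (hTprop _ hx₂T _ hy₂T (fun h => hne12 (Subtype.ext h))).1
          simpa using this
        · rintro ⟨x₂, hx₂⟩ hx₂T ⟨y₂, hy₂⟩ hy₂T htt
          by_cases h12 : x₂ = y₂
          · exact htt.1 (Subtype.ext h12)
          · exact (hTprop _ hx₂T _ hy₂T h12).2 (tw_down hu htt)
        · have himg : Subtype.val '' ((Subtype.val ⁻¹' T : Set {w : β | w ≠ v})) = T := by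
            apply Set.image_preimage_eq_of_subset
            rw [Subtype.range_coe]
            exact fun z hz => hz.1
          conv_rhs => rw [← himg]
          exact (Set.ncard_image_of_injective _ Subtype.val_injective).symm
      have hTle : T.ncard ≤ ϖ := by
        rw [hϖ]
        unfold twinFreeCliqueNum
        exact le_csSup hKbdd hTK
      set TF : Finset β := Finset.univ.filter (· ∈ T) with hTFdef
      have hTFcoe : (TF : Set β) = T := by ext z; simp [hTFdef]
      have hTFcard : TF.card = T.ncard := by rw [← hTFcoe, Set.ncard_coe_finset]
      set badT : Finset (α × β) := TF.image (fun z => (a₁, z)) with hbadTdef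
      have hbadTsub : badT ⊆ NRF := by
        intro p hp
        rw [hbadTdef, Finset.mem_image] at hp
        obtain ⟨z, hz, rfl⟩ := hp
        rw [hmemNRF]
        have hzT : z ∈ T := by simpa [hTFdef] using hz
        exact hzT.1
      have hbadTcard : badT.card = T.ncard := by
        rw [hbadTdef, Finset.card_image_of_injective _ (hinj a₁), hTFcard]
      have hsub2 : NRF \ badT ⊆ Smin := by
        rintro ⟨c, z⟩ hp
        rw [Finset.mem_sdiff] at hp
        obtain ⟨hp1, hp2⟩ := hp
        have hzv : z ≠ v := (hmemNRF (c, z)).mp hp1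
        by_contra hcz
        have hca : c = a₁ := honly c z hzv hcz
        apply hp2
        rw [hbadTdef, Finset.mem_image]
        refine ⟨z, ?_, by rw [hca]⟩
        simp only [hTFdef, Finset.mem_filter, Finset.mem_univ, true_and]
        exact ⟨hzv, by rw [← hca]; exact hcz⟩
      have hcount := Finset.card_le_card hsub2
      rw [Finset.card_sdiff_of_subset hbadTsub, hNRFcard, hbadTcard] at hcount
      omega
    · push_neg at hbad
      have hsub2 : NRF ⊆ Smin := fun p hp => hbad p ((hmemNRF p).mp hp)
      have hcount := Finset.card_le_card hsub2
      rw [hNRFcard] at hcount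
      omega
  have hEq : sdim (rootedProd G H v) = r * (t - 1) - ϖ := le_antisymm hupper hlower
  have h1 : ϖ ≤ r * (t - 1) := hϖle.trans (Nat.le_mul_of_pos_left _ (by omega))
  rw [hEq, Nat.cast_sub h1, Nat.cast_mul, Nat.cast_sub (by omega : 1 ≤ t)]
  push_cast
  ring

end RootedStrong
end

section
/- Let G be a connected graph of order r ≥ 2, let H be a connected graph of order t ≥ 2, and let v be a vertex of H of degree t − 1; write H − v for the graph obtained from H by deleting v. (i) If H − v is connected with diameter two, then dim_s(G∘_v H) = (r − 1)(t − 1) + dim_s(H − v). (ii) If H − v is not connected or has diameter greater than two, then dim_s(G∘_v H) = (r − 1)(t − 1) + dim_s(H). -/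
namespace RootedStrong

variable {V : Type*}

open SimpleGraph

/-- first step on a geodesic -/
lemma exists_first_step (G : SimpleGraph V) {s w : V} (h : 0 < G.dist s w) :
    ∃ w₁, G.Adj w w₁ ∧ G.dist s w₁ + 1 = G.dist s w := by
  have hne : G.dist w s ≠ 0 := by rw [dist_comm]; omega
  obtain ⟨p, hp⟩ := exists_walk_of_dist_ne_zero hne
  cases p with
  | nil => simp at hne
  | @cons _ w₁ _ hadj q =>
    refine ⟨w₁, hadj, ?_⟩
    have hub : G.dist s w₁ ≤ q.length := by
      have := G.dist_le q.reverse
      simpa [SimpleGraph.dist_comm] using this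
    have hreach : G.Reachable s w₁ := ⟨q.reverse⟩
    obtain ⟨r, hr⟩ := hreach.exists_walk_length_eq_dist
    have hlb : G.dist s w ≤ G.dist s w₁ + 1 := by
      have := G.dist_le (r.append hadj.symm.toWalk)
      simpa [Walk.length_append, hr] using this
    have hlen : q.length + 1 = G.dist w s := by simpa using hp
    rw [SimpleGraph.dist_comm] at hlen
    omega

/-- only the endpoints strongly resolve a mutually maximally distant pair -/
lemma resolver_of_mmd {G : SimpleGraph V} (hc : G.Connected) {u w s : V}
    (hmmd : MMD G u w) (hres : StronglyResolves G s u w) : s = u ∨ s = w := by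
  rcases hres with hres | hres
  · -- dist s u = dist s w + dist w u
    right
    by_contra hsw
    have hpos : 0 < G.dist s w := hc.pos_dist_of_ne hsw
    obtain ⟨w₁, hadj, hw₁⟩ := exists_first_step G hpos
    have h1 : G.dist u w₁ ≤ G.dist w u := hmmd.2 w₁ hadj
    have h2 : G.dist s u ≤ G.dist s w₁ + G.dist w₁ u := hc.dist_triangle
    rw [show G.dist u w₁ = G.dist w₁ u from dist_comm] at h1
    omega
  · left
    by_contra hsu
    have hpos : 0 < G.dist s u := hc.pos_dist_of_ne hsu
    obtain ⟨u₁, hadj, hu₁⟩ := exists_first_step G hpos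
    have h1 : G.dist w u₁ ≤ G.dist u w := hmmd.1 u₁ hadj
    have h2 : G.dist s w ≤ G.dist s u₁ + G.dist u₁ w := hc.dist_triangle
    rw [show G.dist w u₁ = G.dist u₁ w from dist_comm] at h1
    omega


lemma dist_lt_card [Fintype V] {G : SimpleGraph V} (hc : G.Connected) (u v : V) :
    G.dist u v < Fintype.card V := by
  obtain ⟨p, hpath, hlen⟩ := hc.exists_path_of_dist u v
  exact hlen ▸ hpath.length_lt

lemma exists_md_aux [Fintype V] {G : SimpleGraph V} (hc : G.Connected) (w : V) :
    ∀ k (u : V), Fintype.card V - G.dist w u ≤ k →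
      ∃ u', MaxDistant G u' w ∧ G.dist w u' = G.dist w u + G.dist u u' := by
  intro k
  induction k with
  | zero =>
    intro u hu
    have := dist_lt_card hc w u
    omega
  | succ k ih =>
    intro u hu
    by_cases hmd : MaxDistant G u w
    · exact ⟨u, hmd, by simp [dist_self]⟩
    · simp only [MaxDistant, not_forall] at hmd
      obtain ⟨z, hadj, hz⟩ := hmd
      push_neg at hz
      have hz1 : G.dist w z ≤ G.dist w u + 1 := by
        have h1 : G.dist w z ≤ G.dist w u + G.dist u z := hc.dist_triangle
        have h2 : G.dist u z = 1 := dist_eq_one_iff_adj.mpr hadj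
        omega
      rw [show G.dist u w = G.dist w u from dist_comm] at hz
      have hz2 : G.dist w z = G.dist w u + 1 := by omega
      have hcard := dist_lt_card hc w u
      obtain ⟨u', hmd', heq'⟩ := ih z (by omega)
      refine ⟨u', hmd', ?_⟩
      have h3 : G.dist w u' ≤ G.dist w u + G.dist u u' := hc.dist_triangle
      have h4 : G.dist u u' ≤ G.dist u z + G.dist z u' := hc.dist_triangle
      have h5 : G.dist u z = 1 := dist_eq_one_iff_adj.mpr hadj
      omega

lemma exists_md [Fintype V] {G : SimpleGraph V} (hc : G.Connected) (w u : V) :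
    ∃ u', MaxDistant G u' w ∧ G.dist w u' = G.dist w u + G.dist u u' :=
  exists_md_aux hc w _ u le_rfl

/-- The key characterization: a set is a strong metric generator iff it covers all
mutually maximally distant pairs. -/
lemma generator_iff_cover [Fintype V] {G : SimpleGraph V} (hc : G.Connected) (S : Set V) :
    IsStrongGenerator G S ↔ ∀ u w, u ≠ w → MMD G u w → u ∈ S ∨ w ∈ S := by
  constructor
  · intro hgen u w hne hmmd
    obtain ⟨s, hsS, hres⟩ := hgen u w hne
    rcases resolver_of_mmd hc hmmd hres with rfl | rfl
    · exact Or.inl hsS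
    · exact Or.inr hsS
  · intro hcov u w hne
    obtain ⟨u', hmdu', hu'⟩ := exists_md hc w u
    obtain ⟨w', hmdw', hw'⟩ := exists_md hc u' w
    have hmdu'w' : MaxDistant G u' w' := by
      intro z hz
      have h1 : G.dist w z ≤ G.dist u' w := hmdu' z hz
      have h2 : G.dist w' z ≤ G.dist w' w + G.dist w z := hc.dist_triangle
      have h3 : G.dist u' w' = G.dist u' w + G.dist w w' := hw'
      rw [show G.dist w' w = G.dist w w' from dist_comm] at h2
      rw [show G.dist w' z = G.dist z w' from dist_comm] at h2 ⊢
      rw [show G.dist u' w' = G.dist w' u' from dist_comm] at h3 ⊢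
      rw [show G.dist w' u' = G.dist u' w' from dist_comm]
      omega
    have hneq : u' ≠ w' := by
      rintro rfl
      have h0 : G.dist u' u' = 0 := dist_self
      have hwu' : w = u' := by
        have := hw'
        rw [h0] at this
        have hz : G.dist u' w = 0 := by omega
        rw [show G.dist u' w = G.dist w u' from dist_comm] at hz
        exact (hc w u').dist_eq_zero_iff.mp hz
      rw [← hwu'] at hu'
      rw [dist_self] at hu'
      have hz2 : G.dist u w = 0 := by
        rw [show G.dist u w = G.dist w u from dist_comm]; omega
      exact hne ((hc u w).dist_eq_zero_iff.mp hz2)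
    rcases hcov u' w' hneq ⟨hmdu'w', hmdw'⟩ with hmem | hmem
    · refine ⟨u', hmem, Or.inr ?_⟩
      -- dist u' w = dist u' u + dist u w
      rw [show G.dist u' w = G.dist w u' from dist_comm,
        show G.dist u' u = G.dist u u' from dist_comm,
        show G.dist u w = G.dist w u from dist_comm]
      omega
    · refine ⟨w', hmem, Or.inl ?_⟩
      -- dist w' u = dist w' w + dist w u
      have e2 : G.dist u' w = G.dist u u' + G.dist u w := by
        rw [show G.dist u' w = G.dist w u' from dist_comm,
          show G.dist u w = G.dist w u from dist_comm]; omega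
      have h4 : G.dist u' w' ≤ G.dist u' u + G.dist u w' := hc.dist_triangle
      have h5 : G.dist u w' ≤ G.dist u w + G.dist w w' := hc.dist_triangle
      rw [show G.dist u' u = G.dist u u' from dist_comm] at h4
      rw [show G.dist w' u = G.dist u w' from dist_comm,
        show G.dist w' w = G.dist w w' from dist_comm,
        show G.dist w u = G.dist u w from dist_comm]
      omega

lemma univ_generator (G : SimpleGraph V) : IsStrongGenerator G (Set.univ) := by
  intro u w _
  exact ⟨u, trivial, Or.inr (by simp [dist_self])⟩

lemma sdim_eq_sInf_cover [Fintype V] {G : SimpleGraph V} (hc : G.Connected) :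
    sdim G = sInf {n | ∃ S : Finset V, S.card = n ∧
      ∀ u w, u ≠ w → MMD G u w → u ∈ S ∨ w ∈ S} := by
  unfold sdim
  congr 1
  ext n
  constructor
  · rintro ⟨S, hcard, hgen⟩
    refine ⟨S, hcard, fun u w hne hmmd => ?_⟩
    simpa using (generator_iff_cover hc (S : Set V)).mp hgen u w hne hmmd
  · rintro ⟨S, hcard, hcov⟩
    refine ⟨S, hcard, (generator_iff_cover hc (S : Set V)).mpr ?_⟩
    intro u w hne hmmd
    simpa using hcov u w hne hmmd

lemma cover_nonempty [Fintype V] (G : SimpleGraph V) :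
    {n | ∃ S : Finset V, S.card = n ∧
      ∀ u w, u ≠ w → MMD G u w → u ∈ S ∨ w ∈ S}.Nonempty :=
  ⟨(Finset.univ : Finset V).card, Finset.univ, rfl, fun u _ _ _ => Or.inl (Finset.mem_univ u)⟩



section Rooted

variable {α β : Type*} [DecidableEq β]
variable (G : SimpleGraph α) (H : SimpleGraph β) (v : β)

/-- 0 if `x = v`, else 1. -/
def eps (x : β) : ℕ := if x = v then 0 else 1

lemma eps_le_one (x : β) : eps v x ≤ 1 := by unfold eps; split <;> omega

lemma eps_v : eps v v = 0 := by simp [eps]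

lemma eps_ne {x : β} (hx : x ≠ v) : eps v x = 1 := by simp [eps, hx]

omit [DecidableEq β] in
lemma rp_adj {p q : α × β} : (rootedProd G H v).Adj p q ↔
    (p.1 = q.1 ∧ H.Adj p.2 q.2) ∨ (p.2 = v ∧ q.2 = v ∧ G.Adj p.1 q.1) := Iff.rfl

def homCopy (a : α) : H →g rootedProd G H v :=
  ⟨fun x => (a, x), fun h => Or.inl ⟨rfl, h⟩⟩

def homRoot : G →g rootedProd G H v :=
  ⟨fun a => (a, v), fun h => Or.inr ⟨rfl, rfl, h⟩⟩

open SimpleGraph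

lemma walk_to_root (hU : ∀ w, w ≠ v → H.Adj v w) (a : α) (x : β) :
    ∃ p : (rootedProd G H v).Walk (a, x) (a, v), p.length = eps v x := by
  by_cases hx : x = v
  · subst hx; exact ⟨Walk.nil, by simp [eps_v]⟩
  · exact ⟨(show (rootedProd G H v).Adj (a, x) (a, v) from
      Or.inl ⟨rfl, (hU x hx).symm⟩).toWalk, by simp [eps_ne _ hx]⟩

lemma exists_walk_rp [DecidableEq α] (hU : ∀ w, w ≠ v → H.Adj v w)
    (hG : G.Connected) (hH : H.Connected) (a b : α) (x y : β) :
    ∃ p : (rootedProd G H v).Walk (a, x) (b, y),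
      p.length = if a = b then H.dist x y else eps v x + G.dist a b + eps v y := by
  by_cases hab : a = b
  · subst hab
    obtain ⟨q, hq⟩ := hH.exists_walk_length_eq_dist x y
    exact ⟨q.map (homCopy G H v a), by rw [if_pos rfl]; exact (Walk.length_map _ _).trans hq⟩
  · obtain ⟨q, hq⟩ := hG.exists_walk_length_eq_dist a b
    obtain ⟨p1, hp1⟩ := walk_to_root G H v hU a x
    obtain ⟨p3, hp3⟩ := walk_to_root G H v hU b y
    refine ⟨p1.append ((q.map (homRoot G H v)).append p3.reverse), ?_⟩
    rw [if_neg hab]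
    exact ((Walk.length_append _ _).trans (congrArg₂ (· + ·) hp1
      ((Walk.length_append _ _).trans (congrArg₂ (· + ·) ((Walk.length_map _ _).trans hq)
        ((Walk.length_reverse _).trans hp3))))).trans (Nat.add_assoc _ _ _).symm

open Classical in
/-- potential function towards `(b, y)` -/
noncomputable def Dfun (b : α) (y : β) : α × β → ℕ :=
  fun p => if p.1 = b then H.dist p.2 y else eps v p.2 + G.dist p.1 b + eps v y

lemma dfun_step (hU : ∀ w, w ≠ v → H.Adj v w) (hG : G.Connected) (hH : H.Connected)
    (b : α) (y : β) {p q : α × β} (hadj : (rootedProd G H v).Adj p q) :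
    Dfun G H v b y p ≤ Dfun G H v b y q + 1 := by
  obtain ⟨a1, x1⟩ := p
  obtain ⟨a2, x2⟩ := q
  rcases (rp_adj G H v).mp hadj with ⟨h1, h2⟩ | ⟨h1, h2, h3⟩
  · dsimp only at h1 h2
    subst h1
    by_cases hb : a1 = b
    · have ht : H.dist x1 y ≤ H.dist x1 x2 + H.dist x2 y := hH.dist_triangle
      have h2' : H.dist x1 x2 = 1 := dist_eq_one_iff_adj.mpr h2
      simp only [Dfun, hb, if_pos]
      omega
    · have e1 : eps v x1 ≤ 1 := eps_le_one v x1
      simp only [Dfun, if_neg hb]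
      omega
  · dsimp only at h1 h2 h3
    have hG12 : G.dist a1 a2 = 1 := dist_eq_one_iff_adj.mpr h3
    have hdv : H.dist v y = eps v y := by
      by_cases hy : y = v
      · simp [hy, SimpleGraph.dist_self, eps_v]
      · simp [dist_eq_one_iff_adj.mpr (hU y hy), eps_ne _ hy]
    by_cases hb1 : a1 = b
    · have hb2 : a2 ≠ b := by rintro rfl; exact G.loopless.irrefl _ (hb1 ▸ h3)
      simp only [Dfun, if_pos hb1, if_neg hb2, h1, h2, eps_v]
      omega
    · by_cases hb2 : a2 = b
      · simp only [Dfun, if_neg hb1, if_pos hb2, h1, h2, eps_v]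
        rw [← hb2]
        omega
      · simp only [Dfun, if_neg hb1, if_neg hb2, h1, h2, eps_v]
        have ht : G.dist a1 b ≤ G.dist a1 a2 + G.dist a2 b := hG.dist_triangle
        omega

lemma dfun_walk_bound (hU : ∀ w, w ≠ v → H.Adj v w) (hG : G.Connected) (hH : H.Connected)
    (b : α) (y : β) : ∀ {p q : α × β} (w : (rootedProd G H v).Walk p q), q = (b, y) →
    Dfun G H v b y p ≤ w.length := by
  intro p q w
  induction w with
  | nil => rintro rfl; simp [Dfun, SimpleGraph.dist_self]
  | cons h q ih =>
    intro hq
    have := dfun_step G H v hU hG hH b y h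
    have := ih hq
    simp only [Walk.length_cons]
    omega

lemma rp_dist [DecidableEq α] (hU : ∀ w, w ≠ v → H.Adj v w)
    (hG : G.Connected) (hH : H.Connected) (a b : α) (x y : β) :
    (rootedProd G H v).dist (a, x) (b, y) =
      if a = b then H.dist x y else eps v x + G.dist a b + eps v y := by
  obtain ⟨p, hp⟩ := exists_walk_rp G H v hU hG hH a b x y
  have hle : (rootedProd G H v).dist (a, x) (b, y) ≤ _ := hp ▸ dist_le p
  have hreach : (rootedProd G H v).Reachable (a, x) (b, y) := ⟨p⟩
  obtain ⟨q, hq⟩ := hreach.exists_walk_length_eq_dist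
  have hge := dfun_walk_bound G H v hU hG hH b y q rfl
  rw [hq] at hge
  have hD : Dfun G H v b y (a, x) =
      if a = b then H.dist x y else eps v x + G.dist a b + eps v y := by
    by_cases hab : a = b <;> simp [Dfun, hab]
  rw [hD] at hge
  omega

lemma rp_connected (hU : ∀ w, w ≠ v → H.Adj v w) (hG : G.Connected) (hH : H.Connected) :
    (rootedProd G H v).Connected := by
  classical
  have hne : Nonempty (α × β) := ⟨(hG.nonempty.some, v)⟩
  refine (connected_iff _).mpr ⟨?_, hne⟩
  rintro ⟨a, x⟩ ⟨b, y⟩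
  obtain ⟨p, -⟩ := exists_walk_rp G H v hU hG hH a b x y
  exact ⟨p⟩

end Rooted


section Main

open SimpleGraph

variable {α β : Type*} [DecidableEq β] [DecidableEq α]
variable {G : SimpleGraph α} {H : SimpleGraph β} {v : β}

lemma dist_v_eq_eps (hU : ∀ w, w ≠ v → H.Adj v w) (y : β) : H.dist v y = eps v y := by
  by_cases hy : y = v
  · simp [hy, SimpleGraph.dist_self, eps_v]
  · simp [dist_eq_one_iff_adj.mpr (hU y hy), eps_ne _ hy]

variable (hU : ∀ w, w ≠ v → H.Adj v w) (hG : G.Connected) (hH : H.Connected)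

include hU hG hH

lemma rp_dist_same (a : α) (x y : β) :
    (rootedProd G H v).dist (a, x) (a, y) = H.dist x y := by
  rw [rp_dist G H v hU hG hH, if_pos rfl]

lemma rp_dist_ne {a b : α} (hab : a ≠ b) (x y : β) :
    (rootedProd G H v).dist (a, x) (b, y) = eps v x + G.dist a b + eps v y := by
  rw [rp_dist G H v hU hG hH, if_neg hab]

lemma md_cross {a b : α} {x : β} (hx : x ≠ v) (hab : a ≠ b) (y : β) :
    MaxDistant (rootedProd G H v) (a, x) (b, y) := by
  rintro ⟨a2, x2⟩ hadj
  rcases (rp_adj G H v).mp hadj with ⟨h1, h2⟩ | ⟨h1, h2, h3⟩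
  · dsimp only at h1 h2
    subst h1
    rw [rp_dist_ne hU hG hH (Ne.symm hab), rp_dist_ne hU hG hH hab]
    have e1 : eps v x2 ≤ 1 := eps_le_one v x2
    have e2 : eps v x = 1 := eps_ne _ hx
    rw [show G.dist b a = G.dist a b from dist_comm]
    omega
  · exact absurd h1 hx

lemma mmd_cross {a b : α} {x y : β} (hx : x ≠ v) (hy : y ≠ v) (hab : a ≠ b) :
    MMD (rootedProd G H v) (a, x) (b, y) :=
  ⟨md_cross hU hG hH hx hab y, md_cross hU hG hH hy (Ne.symm hab) x⟩

lemma md_same_iff {x : β} (hx : x ≠ v) (a : α) (y : β) :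
    MaxDistant (rootedProd G H v) (a, x) (a, y) ↔ MaxDistant H x y := by
  constructor
  · intro h z hz
    have := h (a, z) (Or.inl ⟨rfl, hz⟩)
    rwa [rp_dist_same hU hG hH, rp_dist_same hU hG hH] at this
  · intro h
    rintro ⟨a2, x2⟩ hadj
    rcases (rp_adj G H v).mp hadj with ⟨h1, h2⟩ | ⟨h1, h2, h3⟩
    · dsimp only at h1 h2
      subst h1
      rw [rp_dist_same hU hG hH, rp_dist_same hU hG hH]
      exact h x2 h2
    · exact absurd h1 hx

lemma mmd_same_iff {x y : β} (hx : x ≠ v) (hy : y ≠ v) (a : α) :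
    MMD (rootedProd G H v) (a, x) (a, y) ↔ MMD H x y :=
  and_congr (md_same_iff hU hG hH hx a y) (md_same_iff hU hG hH hy a x)

lemma not_md_root [Fintype α] [Fintype β]
    (hr2 : 1 < Fintype.card α) (ht2 : 1 < Fintype.card β)
    {a : α} {q : α × β} (hq : q ≠ (a, v)) : ¬ MaxDistant (rootedProd G H v) (a, v) q := by
  obtain ⟨b, y⟩ := q
  intro hmd
  obtain ⟨c, hca⟩ := Fintype.exists_ne_of_one_lt_card hr2 a
  have hpos : 0 < G.dist c a := hG.pos_dist_of_ne (Ne.symm (Ne.symm hca))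
  obtain ⟨a', hadj', -⟩ := exists_first_step G hpos
  by_cases hb : b = a
  · subst hb
    have hy : y ≠ v := fun h => hq (by rw [h])
    have haa' : b ≠ a' := G.ne_of_adj hadj'
    have hle := hmd (a', v) (Or.inr ⟨rfl, rfl, hadj'⟩)
    rw [rp_dist_ne hU hG hH haa', rp_dist_same hU hG hH] at hle
    have h1 : G.dist b a' = 1 := dist_eq_one_iff_adj.mpr hadj'
    have h2 : H.dist v y = eps v y := dist_v_eq_eps hU y
    rw [eps_v] at hle
    omega
  · obtain ⟨z, hz⟩ := Fintype.exists_ne_of_one_lt_card ht2 v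
    have hle := hmd (a, z) (Or.inl ⟨rfl, hU z hz⟩)
    rw [rp_dist_ne hU hG hH hb, rp_dist_ne hU hG hH (fun hh => hb hh.symm)] at hle
    rw [show G.dist b a = G.dist a b from dist_comm, eps_ne _ hz, eps_v] at hle
    omega

end Main


section Count

open SimpleGraph

variable {α β : Type*} [Fintype α] [Fintype β] [DecidableEq β] [DecidableEq α]
variable {G : SimpleGraph α} {H : SimpleGraph β} {v : β}

/-- cover of the mutually-maximally-distant pairs avoiding `v` -/
def InnerCover (H : SimpleGraph β) (v : β) (T : Finset β) : Prop :=
  ∀ x y, x ≠ y → x ≠ v → y ≠ v → MMD H x y → x ∈ T ∨ y ∈ T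

/-- minimum size of an inner cover -/
noncomputable def mval (H : SimpleGraph β) (v : β) [Fintype β] [DecidableEq β] : ℕ :=
  sInf {n | ∃ T : Finset β, T.card = n ∧ v ∉ T ∧ InnerCover H v T}

lemma mval_nonempty :
    {n | ∃ T : Finset β, T.card = n ∧ v ∉ T ∧ InnerCover H v T}.Nonempty :=
  ⟨(Finset.univ.erase v).card, Finset.univ.erase v, rfl, by simp,
    fun x y _ hx _ _ => Or.inl (Finset.mem_erase.mpr ⟨hx, Finset.mem_univ x⟩)⟩

lemma mval_mem : ∃ T : Finset β, T.card = mval H v ∧ v ∉ T ∧ InnerCover H v T := by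
  obtain ⟨T, h1, h2, h3⟩ := Nat.sInf_mem (mval_nonempty (H := H) (v := v))
  exact ⟨T, h1, h2, h3⟩

lemma mval_le {T : Finset β} (hv : v ∉ T) (hcov : InnerCover H v T) : mval H v ≤ T.card :=
  Nat.sInf_le ⟨T, rfl, hv, hcov⟩

lemma mval_le_card : mval H v ≤ Fintype.card β - 1 := by
  have := mval_le (H := H) (v := v) (T := Finset.univ.erase v) (by simp)
    (fun x y _ hx _ _ => Or.inl (Finset.mem_erase.mpr ⟨hx, Finset.mem_univ x⟩))
  simpa [Finset.card_erase_of_mem] using this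

variable (hU : ∀ w, w ≠ v → H.Adj v w) (hG : G.Connected) (hH : H.Connected)

include hU hG hH

lemma sdim_rp (hr2 : 1 < Fintype.card α) (ht2 : 1 < Fintype.card β) :
    sdim (rootedProd G H v) =
      (Fintype.card α - 1) * (Fintype.card β - 1) + mval H v := by
  have hRc : (rootedProd G H v).Connected := rp_connected G H v hU hG hH
  rw [sdim_eq_sInf_cover hRc]
  -- every MMD pair has both second coordinates ≠ v
  have hnotv : ∀ p q : α × β, p ≠ q → MMD (rootedProd G H v) p q → p.2 ≠ v ∧ q.2 ≠ v := by
    rintro ⟨a, x⟩ ⟨b, y⟩ hne hmmd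
    constructor
    · rintro rfl
      exact not_md_root hU hG hH hr2 ht2 (fun hh => hne hh.symm) hmmd.1
    · rintro rfl
      exact not_md_root hU hG hH hr2 ht2 (fun hh => hne.symm hh.symm) hmmd.2
  have hcα : 0 < Fintype.card α := by omega
  obtain ⟨c⟩ : Nonempty α := Fintype.card_pos_iff.mp hcα
  apply le_antisymm
  · obtain ⟨T, hTcard, hTv, hTcov⟩ := mval_mem (H := H) (v := v)
    set S : Finset (α × β) :=
      ((Finset.univ.erase c) ×ˢ (Finset.univ.erase v)) ∪ ({c} ×ˢ T) with hS
    have hdisj : Disjoint ((Finset.univ.erase c) ×ˢ (Finset.univ.erase v)) ({c} ×ˢ T) := by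
      rw [Finset.disjoint_left]
      rintro ⟨a, x⟩ hmem hmem'
      rw [Finset.mem_product, Finset.mem_erase] at hmem
      rw [Finset.mem_product, Finset.mem_singleton] at hmem'
      exact hmem.1.1 hmem'.1
    have hScard : S.card = (Fintype.card α - 1) * (Fintype.card β - 1) + T.card := by
      rw [hS, Finset.card_union_of_disjoint hdisj, Finset.card_product, Finset.card_product,
        Finset.card_erase_of_mem (Finset.mem_univ c),
        Finset.card_erase_of_mem (Finset.mem_univ v), Finset.card_singleton,
        Finset.card_univ, Finset.card_univ, one_mul]
    apply Nat.sInf_le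
    refine ⟨S, by rw [hScard, hTcard], ?_⟩
    rintro ⟨a, x⟩ ⟨b, y⟩ hne hmmd
    obtain ⟨hx, hy⟩ := hnotv _ _ hne hmmd
    dsimp only at hx hy
    have hmemfirst : ∀ a' x', a' ≠ c → x' ≠ v → ((a' : α), (x' : β)) ∈ S := by
      intro a' x' h1 h2
      rw [hS, Finset.mem_union]
      exact Or.inl (Finset.mem_product.mpr ⟨Finset.mem_erase.mpr ⟨h1, Finset.mem_univ _⟩,
        Finset.mem_erase.mpr ⟨h2, Finset.mem_univ _⟩⟩)
    have hmemT : ∀ x', x' ∈ T → ((c : α), (x' : β)) ∈ S := by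
      intro x' hx'
      rw [hS, Finset.mem_union]
      exact Or.inr (Finset.mem_product.mpr ⟨Finset.mem_singleton_self c, hx'⟩)
    by_cases hab : a = b
    · subst hab
      have hxy : x ≠ y := fun hh => hne (by rw [hh])
      have hmmdH : MMD H x y := (mmd_same_iff hU hG hH hx hy a).mp hmmd
      by_cases hac : a = c
      · subst hac
        rcases hTcov x y hxy hx hy hmmdH with h | h
        · exact Or.inl (hmemT x h)
        · exact Or.inr (hmemT y h)
      · exact Or.inl (hmemfirst a x hac hx)
    · by_cases hac : a = c
      · have hbc : b ≠ c := fun hh => hab (hac.trans hh.symm)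
        exact Or.inr (hmemfirst b y hbc hy)
      · exact Or.inl (hmemfirst a x hac hx)
  · -- lower bound
    obtain ⟨S, hScard, hScov⟩ := Nat.sInf_mem (cover_nonempty (rootedProd G H v))
    rw [← hScard]
    clear hScard
    by_cases hall : ∀ (a : α) (x : β), x ≠ v → (a, x) ∈ S
    · have hsub : Finset.univ ×ˢ (Finset.univ.erase v) ⊆ S := by
        rintro ⟨a, x⟩ hmem
        rw [Finset.mem_product, Finset.mem_erase] at hmem
        exact hall a x hmem.2.1
      have h1 : (Finset.univ ×ˢ (Finset.univ.erase v)).card ≤ S.card :=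
        Finset.card_le_card hsub
      rw [Finset.card_product, Finset.card_univ,
        Finset.card_erase_of_mem (Finset.mem_univ v), Finset.card_univ] at h1
      have h2 : mval H v ≤ Fintype.card β - 1 := mval_le_card
      have h3 : (Fintype.card α - 1) * (Fintype.card β - 1) + (Fintype.card β - 1)
          = Fintype.card α * (Fintype.card β - 1) := by
        obtain ⟨k, hk⟩ : ∃ k, Fintype.card α = k + 1 := ⟨Fintype.card α - 1, by omega⟩
        rw [hk]
        simp only [Nat.add_sub_cancel]
        ring
      omega
    · push_neg at hall
      obtain ⟨c₀, x₀, hx₀v, hx₀S⟩ := hall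
      have hsub : (Finset.univ.erase c₀) ×ˢ (Finset.univ.erase v) ⊆ S := by
        rintro ⟨a, z⟩ hmem
        rw [Finset.mem_product, Finset.mem_erase, Finset.mem_erase] at hmem
        have hmmd := mmd_cross hU hG hH hmem.2.1 hx₀v hmem.1.1
        have hne : ((a : α), (z : β)) ≠ (c₀, x₀) := by
          intro hh
          exact hmem.1.1 (congrArg Prod.fst hh)
        rcases hScov _ _ hne hmmd with h | h
        · exact h
        · exact absurd h hx₀S
      set F : Finset (α × β) := S.filter (fun p => p.1 = c₀) with hF
      set T : Finset β := (F.image Prod.snd).erase v with hT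
      have hTm : mval H v ≤ T.card := by
        apply mval_le (Finset.notMem_erase v _)
        intro x y hxy hx hy hmmdH
        have hmmd := (mmd_same_iff hU hG hH hx hy c₀).mpr hmmdH
        have hne : ((c₀ : α), (x : β)) ≠ (c₀, y) := fun hh => hxy (congrArg Prod.snd hh)
        rcases hScov _ _ hne hmmd with h | h
        · refine Or.inl (Finset.mem_erase.mpr ⟨hx, Finset.mem_image.mpr
            ⟨(c₀, x), Finset.mem_filter.mpr ⟨h, rfl⟩, rfl⟩⟩)
        · refine Or.inr (Finset.mem_erase.mpr ⟨hy, Finset.mem_image.mpr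
            ⟨(c₀, y), Finset.mem_filter.mpr ⟨h, rfl⟩, rfl⟩⟩)
      have hTF : T.card ≤ F.card :=
        le_trans (Finset.card_le_card (Finset.erase_subset _ _)) Finset.card_image_le
      have hdisj : Disjoint ((Finset.univ.erase c₀) ×ˢ (Finset.univ.erase v)) F := by
        rw [Finset.disjoint_left]
        rintro ⟨a, z⟩ hmem hmem'
        rw [Finset.mem_product, Finset.mem_erase] at hmem
        rw [hF, Finset.mem_filter] at hmem'
        exact hmem.1.1 hmem'.2
      have hsub2 : ((Finset.univ.erase c₀) ×ˢ (Finset.univ.erase v)) ∪ F ⊆ S :=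
        Finset.union_subset hsub (Finset.filter_subset _ _)
      have hcard2 := Finset.card_le_card hsub2
      rw [Finset.card_union_of_disjoint hdisj, Finset.card_product,
        Finset.card_erase_of_mem (Finset.mem_univ c₀),
        Finset.card_erase_of_mem (Finset.mem_univ v), Finset.card_univ, Finset.card_univ]
        at hcard2
      omega

end Count


section Cases

open SimpleGraph

variable {β : Type*} [Fintype β] [DecidableEq β]
variable {H : SimpleGraph β} {v : β}

lemma no_other_universal (hU : ∀ w, w ≠ v → H.Adj v w) (hH : H.Connected)
    (hcase : ¬ (H.induce {w : β | w ≠ v}).Connected ∨ 2 < (H.induce {w : β | w ≠ v}).diam) :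
    ∀ y, y ≠ v → ¬ MaxDistant H v y := by
  intro y hy hmd
  have huniv : ∀ z, z ≠ y → H.Adj y z := by
    intro z hz
    by_cases hzv : z = v
    · subst hzv; exact (hU y hy).symm
    · have h1 := hmd z (hU z hzv)
      have h2 : H.dist v y = 1 := dist_eq_one_iff_adj.mpr (hU y hy)
      have h3 : 0 < H.dist y z := hH.pos_dist_of_ne (Ne.symm hz)
      rw [h2] at h1
      exact dist_eq_one_iff_adj.mp (by omega)
  have hymem : y ∈ {w : β | w ≠ v} := hy
  set y' : {w : β | w ≠ v} := ⟨y, hymem⟩ with hy'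
  have hadj' : ∀ z : {w : β | w ≠ v}, z ≠ y' → (H.induce {w : β | w ≠ v}).Adj y' z := by
    intro z hz
    have hzy : z.val ≠ y := fun hh => hz (Subtype.ext hh)
    exact huniv z.val hzy
  have hreach : ∀ a : {w : β | w ≠ v}, (H.induce {w : β | w ≠ v}).Reachable y' a := by
    intro a
    by_cases h : a = y'
    · exact h ▸ Reachable.refl _
    · exact (hadj' a h).reachable
  have hconn' : (H.induce {w : β | w ≠ v}).Connected := by
    rw [connected_iff]
    exact ⟨fun a b => (hreach a).symm.trans (hreach b), ⟨y'⟩⟩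
  have hdle : ∀ a b : {w : β | w ≠ v}, (H.induce {w : β | w ≠ v}).dist a b ≤ 2 := by
    intro a b
    have t1 := hconn'.dist_triangle (u := a) (v := y') (w := b)
    have d1 : (H.induce {w : β | w ≠ v}).dist a y' ≤ 1 := by
      by_cases h : a = y'
      · rw [h, SimpleGraph.dist_self]; omega
      · rw [dist_eq_one_iff_adj.mpr (hadj' a h).symm]
    have d2 : (H.induce {w : β | w ≠ v}).dist y' b ≤ 1 := by
      by_cases h : b = y'
      · rw [h, SimpleGraph.dist_self]; omega
      · rw [dist_eq_one_iff_adj.mpr (hadj' b h)]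
    omega
  rcases hcase with hc | hc
  · exact hc hconn'
  · haveI : Nonempty ({w : β | w ≠ v} : Set β) := ⟨y'⟩
    obtain ⟨a, b, hab⟩ := exists_dist_eq_diam (G := H.induce {w : β | w ≠ v})
    have := hdle a b
    omega

lemma mval_eq_sdim_case2 (hU : ∀ w, w ≠ v → H.Adj v w) (hH : H.Connected)
    (hcase : ¬ (H.induce {w : β | w ≠ v}).Connected ∨ 2 < (H.induce {w : β | w ≠ v}).diam) :
    mval H v = sdim H := by
  rw [sdim_eq_sInf_cover hH]
  apply le_antisymm
  · obtain ⟨S, hcard, hcov⟩ := Nat.sInf_mem (cover_nonempty H)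
    rw [← hcard]
    have hcov' : InnerCover H v (S.erase v) := by
      intro x y hxy hx hy hmmd
      rcases hcov x y hxy hmmd with h | h
      · exact Or.inl (Finset.mem_erase.mpr ⟨hx, h⟩)
      · exact Or.inr (Finset.mem_erase.mpr ⟨hy, h⟩)
    have h1 := mval_le (Finset.notMem_erase v S) hcov'
    have h2 : (S.erase v).card ≤ S.card := Finset.card_le_card (Finset.erase_subset _ _)
    omega
  · obtain ⟨T, hcard, hTv, hTcov⟩ := mval_mem (H := H) (v := v)
    apply Nat.sInf_le
    refine ⟨T, hcard, ?_⟩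
    intro u w hne hmmd
    have hu : u ≠ v := by
      rintro rfl
      exact no_other_universal hU hH hcase w (Ne.symm hne) hmmd.1
    have hw : w ≠ v := by
      rintro rfl
      exact no_other_universal hU hH hcase u hne hmmd.2
    exact hTcov u w hne hu hw hmmd

lemma dist_two_of_not_adj (hU : ∀ w, w ≠ v → H.Adj v w) (hH : H.Connected)
    {x y : β} (hxy : x ≠ y) (hnadj : ¬ H.Adj x y) : H.dist x y = 2 := by
  have hx : x ≠ v := by rintro rfl; exact hnadj (hU y (Ne.symm hxy))
  have hy : y ≠ v := by rintro rfl; exact hnadj (hU x hx).symm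
  have hle : H.dist x y ≤ 2 := by
    have := H.dist_le (Walk.cons (hU x hx).symm (Walk.cons (hU y hy) Walk.nil))
    simpa using this
  have h0 : H.dist x y ≠ 0 := by
    have := hH.pos_dist_of_ne hxy; omega
  have h1 : H.dist x y ≠ 1 := fun hh => hnadj (dist_eq_one_iff_adj.mp hh)
  omega

lemma mval_eq_sdim_case1 (hU : ∀ w, w ≠ v → H.Adj v w) (hH : H.Connected)
    (hconn' : (H.induce {w : β | w ≠ v}).Connected)
    (hdiam : (H.induce {w : β | w ≠ v}).diam = 2) :
    mval H v = sdim (H.induce {w : β | w ≠ v}) := by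
  have hd2 : ∀ a b : {w : β | w ≠ v}, (H.induce {w : β | w ≠ v}).dist a b ≤ 2 := by
    intro a b
    have h := dist_le_diam (G := H.induce {w : β | w ≠ v})
      (ediam_ne_top_of_diam_ne_zero (by rw [hdiam]; omega)) (u := a) (v := b)
    rw [hdiam] at h
    exact h
  have hdist' : ∀ a b : {w : β | w ≠ v},
      (H.induce {w : β | w ≠ v}).dist a b = H.dist a.val b.val := by
    intro a b
    by_cases hab : a = b
    · rw [hab, SimpleGraph.dist_self, SimpleGraph.dist_self]
    · have hvv : a.val ≠ b.val := fun hh => hab (Subtype.ext hh)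
      by_cases hadj : H.Adj a.val b.val
      · rw [dist_eq_one_iff_adj.mpr hadj,
          dist_eq_one_iff_adj.mpr (show (H.induce {w : β | w ≠ v}).Adj a b from hadj)]
      · rw [dist_two_of_not_adj hU hH hvv hadj]
        have h0 : (H.induce {w : β | w ≠ v}).dist a b ≠ 0 := by
          have := hconn'.pos_dist_of_ne hab; omega
        have h1 : (H.induce {w : β | w ≠ v}).dist a b ≠ 1 := fun hh =>
          hadj ((dist_eq_one_iff_adj (G := H.induce {w : β | w ≠ v})).mp hh)
        have := hd2 a b
        omega
  have hmd_iff : ∀ a b : {w : β | w ≠ v}, a ≠ b →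
      (MaxDistant (H.induce {w : β | w ≠ v}) a b ↔ MaxDistant H a.val b.val) := by
    intro a b hab
    have hvv : a.val ≠ b.val := fun hh => hab (Subtype.ext hh)
    constructor
    · intro h z hz
      by_cases hzv : z = v
      · have hd1 : H.dist b.val z = 1 := by
          rw [hzv, show H.dist b.val v = H.dist v b.val from dist_comm]
          exact dist_eq_one_iff_adj.mpr (hU b.val b.property)
        have hpos : 0 < H.dist a.val b.val := hH.pos_dist_of_ne hvv
        omega
      · have hzmem : z ∈ {w : β | w ≠ v} := hzv
        have := h ⟨z, hzmem⟩ (show (H.induce {w : β | w ≠ v}).Adj a ⟨z, hzmem⟩ from hz)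
        rwa [hdist', hdist'] at this
    · intro h z hz
      have := h z.val hz
      rw [hdist' b z, hdist' a b]
      exact this
  have hmmd_iff : ∀ a b : {w : β | w ≠ v}, a ≠ b →
      (MMD (H.induce {w : β | w ≠ v}) a b ↔ MMD H a.val b.val) :=
    fun a b hab => and_congr (hmd_iff a b hab) (hmd_iff b a (Ne.symm hab))
  rw [sdim_eq_sInf_cover hconn']
  apply le_antisymm
  · obtain ⟨S', hcard, hcov⟩ := Nat.sInf_mem (cover_nonempty (H.induce {w : β | w ≠ v}))
    rw [← hcard]
    set T := S'.image Subtype.val with hT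
    have hTcard : T.card = S'.card := Finset.card_image_of_injective _ Subtype.val_injective
    have hvT : v ∉ T := by
      rw [hT]
      intro hmem
      obtain ⟨a, -, hav⟩ := Finset.mem_image.mp hmem
      exact (a.property : a.val ≠ v) hav
    have hcov' : InnerCover H v T := by
      intro x y hxy hx hy hmmd
      have hxm : x ∈ {w : β | w ≠ v} := hx
      have hym : y ∈ {w : β | w ≠ v} := hy
      have hne' : (⟨x, hxm⟩ : {w : β | w ≠ v}) ≠ ⟨y, hym⟩ := by
        intro hh; exact hxy (congrArg Subtype.val hh)
      rcases hcov _ _ hne' ((hmmd_iff _ _ hne').mpr hmmd) with h | h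
      · exact Or.inl (Finset.mem_image.mpr ⟨_, h, rfl⟩)
      · exact Or.inr (Finset.mem_image.mpr ⟨_, h, rfl⟩)
    have := mval_le hvT hcov'
    omega
  · obtain ⟨T, hcard, hTv, hTcov⟩ := mval_mem (H := H) (v := v)
    apply Nat.sInf_le
    refine ⟨Finset.univ.filter (fun a : {w : β | w ≠ v} => a.val ∈ T), ?_, ?_⟩
    · have himg : (Finset.univ.filter
          (fun a : {w : β | w ≠ v} => a.val ∈ T)).image Subtype.val = T := by
        ext z
        constructor
        · intro hmem
          obtain ⟨a, ha, rfl⟩ := Finset.mem_image.mp hmem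
          exact (Finset.mem_filter.mp ha).2
        · intro hz
          have hzv : z ∈ {w : β | w ≠ v} := fun hh => hTv ((show z = v from hh) ▸ hz)
          exact Finset.mem_image.mpr ⟨⟨z, hzv⟩,
            Finset.mem_filter.mpr ⟨Finset.mem_univ _, hz⟩, rfl⟩
      calc (Finset.univ.filter (fun a : {w : β | w ≠ v} => a.val ∈ T)).card
          = ((Finset.univ.filter
              (fun a : {w : β | w ≠ v} => a.val ∈ T)).image Subtype.val).card :=
            (Finset.card_image_of_injective _ Subtype.val_injective).symm
        _ = T.card := by rw [himg]
        _ = mval H v := hcard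
    · intro a b hne hmmd'
      have hvv : a.val ≠ b.val := fun hh => hne (Subtype.ext hh)
      rcases hTcov a.val b.val hvv (a.property : a.val ≠ v) (b.property : b.val ≠ v)
          ((hmmd_iff a b hne).mp hmmd') with h | h
      · exact Or.inl (Finset.mem_filter.mpr ⟨Finset.mem_univ _, h⟩)
      · exact Or.inr (Finset.mem_filter.mpr ⟨Finset.mem_univ _, h⟩)

end Cases



theorem statement13 {α β : Type*} [Fintype α] [Fintype β] [DecidableEq β]
    (G : SimpleGraph α) (H : SimpleGraph β)
    (hG : G.Connected) (hH : H.Connected)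
    {r t : ℕ} (hr : Fintype.card α = r) (h2r : 2 ≤ r)
    (ht : Fintype.card β = t) (h2t : 2 ≤ t)
    (v : β) (hv : (H.neighborSet v).ncard = t - 1) :
    ((H.induce {w : β | w ≠ v}).Connected ∧ (H.induce {w : β | w ≠ v}).diam = 2 →
      (sdim (rootedProd G H v) : ℤ) =
        ((r : ℤ) - 1) * ((t : ℤ) - 1) + sdim (H.induce {w : β | w ≠ v})) ∧
    (¬ (H.induce {w : β | w ≠ v}).Connected ∨ 2 < (H.induce {w : β | w ≠ v}).diam →
      (sdim (rootedProd G H v) : ℤ) = ((r : ℤ) - 1) * ((t : ℤ) - 1) + sdim H) := by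
  classical
  have hr2 : 1 < Fintype.card α := by omega
  have ht2 : 1 < Fintype.card β := by omega
  -- v is a universal vertex
  have hU : ∀ w, w ≠ v → H.Adj v w := by
    have hsub : H.neighborSet v ⊆ {w : β | w ≠ v} := fun w hw =>
      (show H.Adj v w from hw).ne'
    have hcompl : {w : β | w ≠ v} = ({v}ᶜ : Set β) := by ext w; simp
    have hset : ({w : β | w ≠ v} : Set β).ncard = Fintype.card β - 1 := by
      rw [hcompl]
      have h1 := Set.ncard_add_ncard_compl ({v} : Set β)
      have h2 : ({v} : Set β).ncard = 1 := Set.ncard_singleton v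
      have h3 : (Set.univ : Set β).ncard = Fintype.card β := by
        simp [Set.ncard_univ]
      have h4 : Nat.card β = Fintype.card β := Nat.card_eq_fintype_card
      omega
    have heq : H.neighborSet v = {w : β | w ≠ v} :=
      Set.eq_of_subset_of_ncard_le hsub (by rw [hset, hv, ht]) (Set.toFinite _)
    intro w hw
    have : w ∈ H.neighborSet v := by rw [heq]; exact hw
    exact this
  have hmain := sdim_rp hU hG hH hr2 ht2
  have e1 : ((Fintype.card α - 1 : ℕ) : ℤ) = (r : ℤ) - 1 := by omega
  have e2 : ((Fintype.card β - 1 : ℕ) : ℤ) = (t : ℤ) - 1 := by omega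
  constructor
  · rintro ⟨hconn', hdiam⟩
    have hm := mval_eq_sdim_case1 hU hH hconn' hdiam
    rw [hmain, hm]
    push_cast
    rw [e1, e2]
  · intro hcase
    have hm := mval_eq_sdim_case2 hU hH hcase
    rw [hmain, hm]
    push_cast
    rw [e1, e2]


end RootedStrong
end
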